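/- A profile P with repeated preferences is single crossing with respect to some tree if and only if the profile P' obtained from P by removing duplicate preferences is single crossing with respect to some tree. -/

import Mathlib

/-- `P u` and `P v` order the pair `(x,y)` differently. -/
def Crosses {V C : Type*} (P : V → C → C → Prop) (u v : V) (x y : C) : Prop :=
  ¬ (P u x y ↔ P v x y)

/-- A profile `P` indexed by the vertices of `G` is single crossing with respect to `G`:
for every pair of candidates, at most one edge of `G` separates the voters preferring
`x` over `y` from those preferring `y` over `x`. -/
def SingleCrossingWrt {V C : Type*} (G : SimpleGraph V) (P : V → C → C → Prop) : Prop :=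
  ∀ x y : C, ∀ u v u' v' : V, G.Adj u v → G.Adj u' v' →
    Crosses P u v x y → Crosses P u' v' x y → s(u, v) = s(u', v')

/-- The pairwise majority relation of three preferences. -/
def Maj3 {C : Type*} (p q r : C → C → Prop) : C → C → Prop := fun x y =>
  (p x y ∧ q x y) ∨ (p x y ∧ r x y) ∨ (q x y ∧ r x y)

/-- The triad majority property for a set of (strict) linear orders. -/
def TriadClosed {C : Type*} (Q : Set (C → C → Prop)) : Prop :=
  ∀ p q r, p ∈ Q → q ∈ Q → r ∈ Q →
    IsStrictTotalOrder C (Maj3 p q r) ∧ Maj3 p q r ∈ Q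

/-- The triad majority closure of a set of linear orders. -/
def triadClosure {C : Type*} (P : Set (C → C → Prop)) : Set (C → C → Prop) :=
  ⋂₀ {Q | P ⊆ Q ∧ (∀ p ∈ Q, IsStrictTotalOrder C p) ∧ TriadClosed Q}

/-- The connected component of `u` in `G − r`: vertices reachable from `u` by a walk
avoiding `r`. -/
def CompAvoid {V : Type*} (G : SimpleGraph V) (r u : V) : Set V :=
  {w | ∃ p : G.Walk u w, r ∉ p.support}

/-- A set of linear orders is single crossing with respect to some tree. -/
def SCTreeSet {C : Type*} (Q : Set (C → C → Prop)) : Prop :=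
  ∃ (V : Type) (_ : Fintype V) (G : SimpleGraph V) (f : V → C → C → Prop),
    G.IsTree ∧ (∀ v, IsStrictTotalOrder C (f v)) ∧ Set.range f = Q ∧
      SingleCrossingWrt G f

section Aux

variable {V C : Type*}

lemma rel_ne_exists {p q : C → C → Prop} (h : p ≠ q) : ∃ x y, ¬ (p x y ↔ q x y) := by
  by_contra hc
  push_neg at hc
  exact h (funext fun x => funext fun y => propext (hc x y))

lemma exists_cross_edge {G : SimpleGraph V} (f : V → C → C → Prop) (x y : C) :
    ∀ {c d : V} (w : G.Walk c d), ¬ (f c x y ↔ f d x y) →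
      ∃ u v, G.Adj u v ∧ ¬ (f u x y ↔ f v x y) ∧ s(u, v) ∈ w.edges := by
  intro c d w
  induction w with
  | nil => exact fun h => absurd Iff.rfl h
  | @cons a b d hadj p ih =>
    intro hcd
    by_cases hab : f a x y ↔ f b x y
    · obtain ⟨u, v, h1, h2, h3⟩ := ih (fun hbd => hcd (hab.trans hbd))
      exact ⟨u, v, h1, h2, by simp [SimpleGraph.Walk.edges_cons, h3]⟩
    · exact ⟨a, b, hadj, hab, by simp [SimpleGraph.Walk.edges_cons]⟩

lemma reach_iff {G : SimpleGraph V} {Q : V → Prop}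
    (h : ∀ a b, G.Adj a b → (Q a ↔ Q b)) {u v : V} (hr : G.Reachable u v) :
    Q u ↔ Q v := by
  obtain ⟨w⟩ := hr
  induction w with
  | nil => rfl
  | cons hadj p ih => exact (h _ _ hadj).trans ih

/-- In a single-crossing tree, any path between two voters with the same preference
consists only of voters with that preference. -/
lemma const_walk {G : SimpleGraph V} (hconn : G.Connected)
    (f : V → C → C → Prop) (hSC : SingleCrossingWrt G f) :
    ∀ a b : V, f a = f b → ∃ w : G.Walk a b, ∀ z ∈ w.support, f z = f a := by
  classical
  intro a b hab
  obtain ⟨w0⟩ := hconn a b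
  refine ⟨w0.bypass, ?_⟩
  have hp : w0.bypass.IsPath := w0.bypass_isPath
  intro z hz
  by_contra hne
  obtain ⟨x, y, hxy⟩ := rel_ne_exists (fun h : f z = f a => hne h)
  have h1 : ¬ (f a x y ↔ f z x y) := fun h => hxy h.symm
  have h2 : ¬ (f z x y ↔ f b x y) := by rw [← hab]; exact hxy
  obtain ⟨u, v, hu1, hu2, hu3⟩ := exists_cross_edge f x y (w0.bypass.takeUntil z hz) h1
  obtain ⟨u', v', hv1, hv2, hv3⟩ := exists_cross_edge f x y (w0.bypass.dropUntil z hz) h2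
  have heq : s(u, v) = s(u', v') := hSC x y u v u' v' hu1 hv1 hu2 hv2
  have hsplit : w0.bypass.edges
      = (w0.bypass.takeUntil z hz).edges ++ (w0.bypass.dropUntil z hz).edges := by
    conv_lhs => rw [← SimpleGraph.Walk.take_spec w0.bypass hz]
    rw [SimpleGraph.Walk.edges_append]
  have hnd := hp.edges_nodup
  rw [hsplit] at hnd
  exact (List.disjoint_of_nodup_append hnd) hu3 (heq ▸ hv3)

end Aux

/-- a profile `P` (possibly with repeated preferences) is single crossing
with respect to some tree on its voter set iff the profile of its distinct preferences
(the range of `P`) is single crossing with respect to some tree. -/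
theorem stmt_12 {V C : Type} [Fintype V] [Nonempty V] (P : V → C → C → Prop)
    (hlin : ∀ v, IsStrictTotalOrder C (P v)) :
    (∃ G : SimpleGraph V, G.IsTree ∧ SingleCrossingWrt G P) ↔
      SCTreeSet (Set.range P) := by
  constructor
  · rintro ⟨G, hG, hSC⟩
    exact ⟨V, inferInstance, G, P, hG, hlin, rfl, hSC⟩
  · rintro ⟨V₁, _inst, G₁, f, hG₁, hflin, hrange, hSC⟩
    classical
    have hV₁ : Nonempty V₁ := hG₁.isConnected.nonempty
    -- basic maps
    have hmemP : ∀ a : V₁, f a ∈ Set.range P := fun a => hrange ▸ Set.mem_range_self a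
    have hmemf : ∀ v : V, P v ∈ Set.range f := fun v => hrange.symm ▸ Set.mem_range_self v
    set h : V₁ → V := fun a => Function.invFun P (f a) with hh
    set ρ : V → V := fun v => Function.invFun P (P v) with hρdef
    set g : V → V₁ := fun v => Function.invFun f (P v) with hg
    have hhP : ∀ a, P (h a) = f a := fun a => Function.invFun_eq (hmemP a)
    have hPρ : ∀ v, P (ρ v) = P v := fun v => Function.invFun_eq ⟨v, rfl⟩
    have hfg : ∀ v, f (g v) = P v := fun v => Function.invFun_eq (hmemf v)
    have hρeq : ∀ u v, P u = P v → ρ u = ρ v := fun u v h' => congrArg (Function.invFun P) h'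
    have hρh : ∀ a, ρ (h a) = h a := fun a => congrArg (Function.invFun P) (hhP a)
    have hρρ : ∀ v, ρ (ρ v) = ρ v := fun v => congrArg (Function.invFun P) (hPρ v)
    have hheq : ∀ a b : V₁, f a = f b → h a = h b := fun a b h' => congrArg (Function.invFun P) h'
    have hhne : ∀ a b : V₁, h a = h b → f a = f b := fun a b h' => by
      rw [← hhP a, ← hhP b, h']
    have hhg : ∀ v, h (g v) = ρ v := fun v => congrArg (Function.invFun P) (hfg v)
    -- the tree on V
    set T₂ : SimpleGraph V :=
      { Adj := fun u v => u ≠ v ∧ ((P u = P v ∧ (ρ u = u ∨ ρ v = v)) ∨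
          (ρ u = u ∧ ρ v = v ∧ ∃ a b, G₁.Adj a b ∧ h a = u ∧ h b = v)),
        symm := by
          constructor
          rintro u v ⟨hne, ⟨h1, h2⟩ | ⟨h1, h2, a, b, hab, ha, hb⟩⟩
          · exact ⟨hne.symm, Or.inl ⟨h1.symm, h2.symm⟩⟩
          · exact ⟨hne.symm, Or.inr ⟨h2, h1, b, a, hab.symm, hb, ha⟩⟩
        loopless := ⟨fun u hu => hu.1 rfl⟩ } with hT₂
    have hT₂adj : ∀ u v : V, T₂.Adj u v ↔ (u ≠ v ∧ ((P u = P v ∧ (ρ u = u ∨ ρ v = v)) ∨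
        (ρ u = u ∧ ρ v = v ∧ ∃ a b, G₁.Adj a b ∧ h a = u ∧ h b = v))) := fun u v => Iff.rfl
    -- unique neighbor of a non-representative
    have hNBR : ∀ v w : V, ρ v ≠ v → T₂.Adj v w → w = ρ v := by
      rintro v w hv ⟨hne, ⟨h1, h2 | h2⟩ | ⟨h1, _⟩⟩
      · exact absurd h2 hv
      · exact h2.symm.trans (hρeq w v h1.symm)
      · exact absurd h1 hv
    -- edges from a non-representative to its representative are bridges
    have hbr1 : ∀ v r : V, ρ v = r → r ≠ v →
        ¬ (T₂ \ SimpleGraph.fromEdgeSet {s(v, r)}).Reachable v r := by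
      intro v r hρr hrv hr
      obtain ⟨w⟩ := hr
      cases w with
      | nil => exact hrv rfl
      | @cons _ b _ hadj p =>
        rw [SimpleGraph.sdiff_adj, SimpleGraph.fromEdgeSet_adj] at hadj
        obtain ⟨hadj1, hadj2⟩ := hadj
        have hb : b = ρ v := hNBR v b (fun hc => hrv (hρr.symm.trans hc)) hadj1
        exact hadj2 ⟨by rw [hb, hρr]; exact Set.mem_singleton _, hadj1.ne⟩
    -- constant-preference walks within fibers of f
    have hconstW := const_walk hG₁.isConnected f hSC
    -- reachability: fibers map to one side of a bridge
    have hSfiber : ∀ (a b : V₁), f a ≠ f b → ∀ c d : V₁, f c = f d →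
        ((G₁ \ SimpleGraph.fromEdgeSet {s(a, b)}).Reachable a c ↔
         (G₁ \ SimpleGraph.fromEdgeSet {s(a, b)}).Reachable a d) := by
      intro a b hfab c d hcd
      obtain ⟨w, hw⟩ := hconstW c d hcd
      have hwe : ∀ e ∈ w.edges, e ∉ ({s(a, b)} : Set (Sym2 V₁)) := by
        intro e he hmem
        rw [Set.mem_singleton_iff] at hmem
        subst hmem
        have ha' : a ∈ w.support := SimpleGraph.Walk.fst_mem_support_of_mem_edges w he
        have hb' : b ∈ w.support := SimpleGraph.Walk.snd_mem_support_of_mem_edges w he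
        exact hfab ((hw a ha').trans (hw b hb').symm)
      have hr : (G₁ \ SimpleGraph.fromEdgeSet {s(a, b)}).Reachable c d :=
        ⟨w.toDeleteEdges _ hwe⟩
      exact ⟨fun h' => h'.trans hr, fun h' => h'.trans hr.symm⟩
    -- cross edges are bridges
    have hbr2 : ∀ (a b : V₁), G₁.Adj a b → h a ≠ h b →
        ¬ (T₂ \ SimpleGraph.fromEdgeSet {s(h a, h b)}).Reachable (h a) (h b) := by
      intro a b hab hne hr
      have hfab : f a ≠ f b := fun h' => hne (hheq a b h')
      have hbridge : ¬ (G₁ \ SimpleGraph.fromEdgeSet {s(a, b)}).Reachable a b :=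
        ((SimpleGraph.isBridge_iff).mp
          ((SimpleGraph.isAcyclic_iff_forall_adj_isBridge.mp hG₁.IsAcyclic) hab))
      set S : V₁ → Prop := fun c => (G₁ \ SimpleGraph.fromEdgeSet {s(a, b)}).Reachable a c with hS
      set Q : V → Prop := fun w => S (g w) with hQ
      have hQpres : ∀ w w' : V, (T₂ \ SimpleGraph.fromEdgeSet {s(h a, h b)}).Adj w w' →
          (Q w ↔ Q w') := by
        intro w w' hadj'
        rw [SimpleGraph.sdiff_adj, SimpleGraph.fromEdgeSet_adj] at hadj'
        obtain ⟨⟨hnew, hcl⟩, hnotdel⟩ := hadj'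
        have hsne : s(w, w') ≠ s(h a, h b) := fun h' => hnotdel ⟨h', hnew⟩
        rcases hcl with ⟨h1, _⟩ | ⟨_, _, a', b', hab', ha', hb'⟩
        · exact hSfiber a b hfab (g w) (g w') (by rw [hfg, hfg, h1])
        · have hga : f (g w) = f a' := by rw [hfg, ← ha', hhP]
          have hgb : f (g w') = f b' := by rw [hfg, ← hb', hhP]
          have hsne' : s(a', b') ≠ s(a, b) := by
            intro h'
            rw [Sym2.eq_iff] at h'
            apply hsne
            rcases h' with ⟨rfl, rfl⟩ | ⟨rfl, rfl⟩
            · rw [ha', hb']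
            · rw [← ha', ← hb', Sym2.eq_swap]
          have hadj'' : (G₁ \ SimpleGraph.fromEdgeSet {s(a, b)}).Adj a' b' := by
            rw [SimpleGraph.sdiff_adj, SimpleGraph.fromEdgeSet_adj]
            exact ⟨hab', fun hc => hsne' hc.1⟩
          have hrab : S a' ↔ S b' :=
            ⟨fun h' => h'.trans hadj''.reachable, fun h' => h'.trans hadj''.symm.reachable⟩
          calc Q w ↔ S a' := hSfiber a b hfab (g w) a' hga
            _ ↔ S b' := hrab
            _ ↔ Q w' := (hSfiber a b hfab (g w') b' hgb).symm
      have hQu : Q (h a) := by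
        have : f (g (h a)) = f a := by rw [hfg, hhP]
        exact (hSfiber a b hfab (g (h a)) a this).mpr (SimpleGraph.Reachable.refl a)
      have hQv : ¬ Q (h b) := by
        have : f (g (h b)) = f b := by rw [hfg, hhP]
        intro hc
        exact hbridge ((hSfiber a b hfab (g (h b)) b this).mp hc)
      exact hQv ((reach_iff hQpres hr).mp hQu)
    -- T₂ is acyclic
    have hacyclic : T₂.IsAcyclic := by
      rw [SimpleGraph.isAcyclic_iff_forall_adj_isBridge]
      intro u v hadj
      rw [SimpleGraph.isBridge_iff]
      obtain ⟨hne, ⟨h1, h2 | h2⟩ | ⟨h1, h2, a, b, hab, ha, hb⟩⟩ := hadj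
      · -- u is the representative, v is not
        have hρv : ρ v = u := (hρeq v u h1.symm).trans h2
        intro hr
        refine hbr1 v u hρv hne ?_
        have hsw : s(v, u) = s(u, v) := Sym2.eq_swap
        rw [hsw]
        exact hr.symm
      · -- v is the representative, u is not
        have hρu : ρ u = v := (hρeq u v h1).trans h2
        exact hbr1 u v hρu (Ne.symm hne)
      · subst ha; subst hb
        exact hbr2 a b hab hne
    -- T₂ is connected
    have hreachρ : ∀ v : V, T₂.Reachable v (ρ v) := by
      intro v
      by_cases hc : ρ v = v
      · rw [hc]
      · exact (SimpleGraph.Adj.reachable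
          ⟨fun h' => hc h'.symm, Or.inl ⟨(hPρ v).symm, Or.inr (hρρ v)⟩⟩)
    have hreachh : ∀ a b : V₁, T₂.Reachable (h a) (h b) := by
      intro a b
      obtain ⟨w⟩ := hG₁.isConnected a b
      induction w with
      | nil => exact SimpleGraph.Reachable.refl _
      | @cons a c d hadj p ih =>
        refine SimpleGraph.Reachable.trans ?_ ih
        by_cases hfc : f a = f c
        · rw [hheq a c hfc]
        · refine SimpleGraph.Adj.reachable ?_
          exact ⟨fun h' => hfc (hhne a c h'), Or.inr ⟨hρh a, hρh c, a, c, hadj, rfl, rfl⟩⟩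
    have hconn : T₂.Connected := by
      rw [SimpleGraph.connected_iff]
      refine ⟨fun u v => ?_, ‹Nonempty V›⟩
      have h3 := hreachh (g u) (g v)
      rw [hhg, hhg] at h3
      exact ((hreachρ u).trans h3).trans (hreachρ v).symm
    refine ⟨T₂, ⟨hconn, hacyclic⟩, ?_⟩
    -- single crossing
    intro x y u v u' v' hadj hadj' hc hc'
    obtain ⟨hne, ⟨h1, _⟩ | ⟨_, _, a, b, hab, ha, hb⟩⟩ := hadj
    · exact absurd (iff_of_eq (congrFun (congrFun h1 x) y)) hc
    obtain ⟨hne', ⟨h1', _⟩ | ⟨_, _, a', b', hab', ha', hb'⟩⟩ := hadj'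
    · exact absurd (iff_of_eq (congrFun (congrFun h1' x) y)) hc'
    subst ha; subst hb; subst ha'; subst hb'
    have hca : Crosses f a b x y := by
      intro hiff
      exact hc (by rw [show P (h a) = f a from hhP a, show P (h b) = f b from hhP b]; exact hiff)
    have hca' : Crosses f a' b' x y := by
      intro hiff
      exact hc' (by rw [show P (h a') = f a' from hhP a',
        show P (h b') = f b' from hhP b']; exact hiff)
    have := hSC x y a b a' b' hab hab' hca hca'
    rw [Sym2.eq_iff] at this ⊢
    rcases this with ⟨rfl, rfl⟩ | ⟨rfl, rfl⟩
    · exact Or.inl ⟨rfl, rfl⟩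
    · exact Or.inr ⟨rfl, rfl⟩
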